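/- arXiv:2505.02264 — 6 statements merged into one kernel-verified Lean document; each statement's English description precedes it below -/
import Mathlib

section
/- Let C be a category admitting products indexed by I and by I × I, let G : P₂(I) ⥤ C be a functor, let L be an object of C and π_i : L ⟶ G(i) a morphism for each i ∈ I. Then the following are equivalent: (1) there is a limit cone over G with apex L whose component at the singleton {i} is π_i for every i ∈ I; (2) the diagram L ⟶ ∏_{i∈I} G(i) ⇉ ∏_{(i,j)∈I²} G(i,j) is an equalizer, where the first morphism is ⟨π_i⟩_{i∈I}, and where the two parallel morphisms have (i,j)-component G(𝔦_{i,j}) ∘ p_i and G(𝔦_{j,i}) ∘ p_j respectively (p_i denoting the product projection to G(i)). -/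
open CategoryTheory CategoryTheory.Limits Opposite

universe w v u

/-- The defining property of objects of the truncated power set category of order `2`:
nonempty subsets with at most two elements. -/
def P2Prop (I : Type w) : Set I → Prop :=
  fun S => S.Nonempty ∧ ∃ a b : I, S ⊆ ({a, b} : Set I)

/-- The truncated power set category of `I` of order `2`, i.e. the poset category of
subsets `S ⊆ I` with `1 ≤ |S| ≤ 2`, with a unique morphism `S ⟶ T` exactly when `S ⊆ T`. -/
abbrev P2 (I : Type w) := CategoryTheory.ObjectProperty.FullSubcategory (P2Prop I)

namespace P2

variable {I : Type w}

/-- The singleton `{i}` as an object of `P2 I`. -/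
def single (i : I) : P2 I :=
  ⟨{i}, Set.singleton_nonempty i, i, i, by simp⟩

/-- The pair `{i, j}` as an object of `P2 I`. -/
def pair (i j : I) : P2 I :=
  ⟨{i, j}, ⟨i, by simp⟩, i, j, le_refl _⟩

/-- The inclusion morphism `𝔦_{i,j} : {i} ⟶ {i, j}`. -/
def inclLeft (i j : I) : single i ⟶ pair i j :=
  ObjectProperty.homMk (homOfLE (by simp [single, pair]))

/-- The inclusion morphism `𝔦_{j,i} : {j} ⟶ {i, j}`. -/
def inclRight (i j : I) : single j ⟶ pair i j :=
  ObjectProperty.homMk (homOfLE (by simp [single, pair]))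

end P2

namespace GluingAux

variable {I : Type w} {C : Type u} [Category.{v} C]

/-- A choice of element of an object of `P2 I`. -/
noncomputable def pt (S : P2 I) : I := S.2.1.choose

lemma pt_mem (S : P2 I) : pt S ∈ S.obj := S.2.1.choose_spec

/-- The inclusion of a singleton of an element of `S` into `S`. -/
def memHom {i : I} {S : P2 I} (h : i ∈ S.obj) : P2.single i ⟶ S :=
  ObjectProperty.homMk (homOfLE (by simpa [P2.single] using Set.singleton_subset_iff.mpr h))

instance (S T : P2 I) : Subsingleton (S ⟶ T) :=
  ⟨fun f g => ObjectProperty.hom_ext _ (Subsingleton.elim _ _)⟩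

variable (G : P2 I ⥤ C) [HasProduct fun i : I => G.obj (P2.single i)]

lemma key {X : C} (f : X ⟶ ∏ᶜ fun i : I => G.obj (P2.single i))
    (w : ∀ i j : I, f ≫ Pi.π _ i ≫ G.map (P2.inclLeft i j) =
        f ≫ Pi.π _ j ≫ G.map (P2.inclRight i j))
    {S : P2 I} {i j : I} (hi : i ∈ S.obj) (hj : j ∈ S.obj) :
    f ≫ Pi.π _ i ≫ G.map (memHom hi) = f ≫ Pi.π _ j ≫ G.map (memHom hj) := by
  have t : P2.pair i j ⟶ S := ObjectProperty.homMk (homOfLE (by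
    simpa [P2.pair] using Set.insert_subset hi (Set.singleton_subset_iff.mpr hj)))
  have h1 : memHom hi = P2.inclLeft i j ≫ t := Subsingleton.elim _ _
  have h2 : memHom hj = P2.inclRight i j ≫ t := Subsingleton.elim _ _
  calc f ≫ Pi.π _ i ≫ G.map (memHom hi)
      = (f ≫ Pi.π _ i ≫ G.map (P2.inclLeft i j)) ≫ G.map t := by
        rw [h1, G.map_comp]; simp
    _ = (f ≫ Pi.π _ j ≫ G.map (P2.inclRight i j)) ≫ G.map t := by rw [w i j]
    _ = _ := by rw [h2, G.map_comp]; simp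

/-- A cone over `G` from a map into the product satisfying the componentwise
fork condition. -/
noncomputable def coneOf {X : C} (f : X ⟶ ∏ᶜ fun i : I => G.obj (P2.single i))
    (w : ∀ i j : I, f ≫ Pi.π _ i ≫ G.map (P2.inclLeft i j) =
        f ≫ Pi.π _ j ≫ G.map (P2.inclRight i j)) : Cone G where
  pt := X
  π :=
    { app := fun S => f ≫ Pi.π _ (pt S) ≫ G.map (memHom (pt_mem S))
      naturality := fun S T g => by
        dsimp
        rw [Category.id_comp, Category.assoc, Category.assoc, ← G.map_comp]
        have hS : pt S ∈ T.obj := leOfHom g.hom (pt_mem S)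
        have : memHom (pt_mem S) ≫ g = memHom hS := Subsingleton.elim _ _
        rw [this]
        exact (key G f w hS (pt_mem T)).symm }

lemma coneOf_app_single {X : C} (f : X ⟶ ∏ᶜ fun i : I => G.obj (P2.single i))
    (w : ∀ i j : I, f ≫ Pi.π _ i ≫ G.map (P2.inclLeft i j) =
        f ≫ Pi.π _ j ≫ G.map (P2.inclRight i j)) (i : I) :
    (coneOf G f w).π.app (P2.single i) = f ≫ Pi.π _ i := by
  have hmem : i ∈ (P2.single i).obj := by simp [P2.single]
  have hkey := key G f w (pt_mem (P2.single i)) hmem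
  have hid : memHom hmem = 𝟙 (P2.single i) := Subsingleton.elim _ _
  rw [hid, G.map_id, Category.comp_id] at hkey
  exact hkey

variable [HasProduct fun p : I × I => G.obj (P2.pair p.1 p.2)]

/-- The global fork condition implies the componentwise one. -/
lemma compwise {X : C} (f : X ⟶ ∏ᶜ fun i : I => G.obj (P2.single i))
    (hw : f ≫ Pi.lift (fun p : I × I =>
        Pi.π (fun i : I => G.obj (P2.single i)) p.1 ≫ G.map (P2.inclLeft p.1 p.2)) =
      f ≫ Pi.lift (fun p : I × I =>
        Pi.π (fun i : I => G.obj (P2.single i)) p.2 ≫ G.map (P2.inclRight p.1 p.2))) :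
    ∀ i j : I, f ≫ Pi.π _ i ≫ G.map (P2.inclLeft i j) =
        f ≫ Pi.π _ j ≫ G.map (P2.inclRight i j) := by
  intro i j
  have := hw =≫ Pi.π (fun p : I × I => G.obj (P2.pair p.1 p.2)) (i, j)
  simpa using this

/-- Any cone over `G` gives a fork. -/
lemma forkCond (s : Cone G) :
    Pi.lift (fun i => s.π.app (P2.single i)) ≫ Pi.lift (fun p : I × I =>
        Pi.π (fun i : I => G.obj (P2.single i)) p.1 ≫ G.map (P2.inclLeft p.1 p.2)) =
      Pi.lift (fun i => s.π.app (P2.single i)) ≫ Pi.lift (fun p : I × I =>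
        Pi.π (fun i : I => G.obj (P2.single i)) p.2 ≫ G.map (P2.inclRight p.1 p.2)) := by
  apply Pi.hom_ext
  intro p
  simp only [Category.assoc, limit.lift_π]
  simp only [Fan.mk_pt, Fan.mk_π_app, limit.lift_π_assoc, Discrete.functor_obj_eq_as]
  rw [s.w (P2.inclLeft p.1 p.2), s.w (P2.inclRight p.1 p.2)]

end GluingAux

/-- For a functor `G : P₂(I) ⥤ C`, an object `L` and morphisms
`π i : L ⟶ G {i}`, having a limit cone over `G` with apex `L` whose singleton components are
the `π i` is equivalent to the diagram
`L ⟶ ∏_{i} G(i) ⇉ ∏_{(i,j)} G(i,j)` being an equalizer. -/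
theorem gluing_iff_equalizer {I : Type w} {C : Type u} [Category.{v} C]
    (G : P2 I ⥤ C) (L : C) (π : ∀ i : I, L ⟶ G.obj (P2.single i))
    [HasProduct fun i : I => G.obj (P2.single i)]
    [HasProduct fun p : I × I => G.obj (P2.pair p.1 p.2)] :
    (∃ α : (Functor.const (P2 I)).obj L ⟶ G,
        (∀ i : I, α.app (P2.single i) = π i) ∧
          Nonempty (IsLimit (Cone.mk L α))) ↔
      (∃ w : Pi.lift π ≫
            Pi.lift (fun p : I × I =>
              Pi.π (fun i : I => G.obj (P2.single i)) p.1 ≫ G.map (P2.inclLeft p.1 p.2)) =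
          Pi.lift π ≫
            Pi.lift (fun p : I × I =>
              Pi.π (fun i : I => G.obj (P2.single i)) p.2 ≫ G.map (P2.inclRight p.1 p.2)),
        Nonempty (IsLimit (Fork.ofι (Pi.lift π) w))) := by
  open GluingAux in
  constructor
  · rintro ⟨α, hα, ⟨hL⟩⟩
    have hlift : Pi.lift (fun i => α.app (P2.single i)) = Pi.lift π := by
      apply Pi.hom_ext; intro i; simp [hα i]
    have w : Pi.lift π ≫
          Pi.lift (fun p : I × I =>
            Pi.π (fun i : I => G.obj (P2.single i)) p.1 ≫ G.map (P2.inclLeft p.1 p.2)) =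
        Pi.lift π ≫
          Pi.lift (fun p : I × I =>
            Pi.π (fun i : I => G.obj (P2.single i)) p.2 ≫ G.map (P2.inclRight p.1 p.2)) := by
      rw [← hlift]; exact forkCond G (Cone.mk L α)
    refine ⟨w, ⟨Fork.IsLimit.mk _
      (fun s => hL.lift (coneOf G s.ι (compwise G s.ι s.condition))) ?_ ?_⟩⟩
    · intro s
      rw [Fork.ι_ofι]
      apply Pi.hom_ext
      intro i
      erw [Category.assoc, limit.lift_π]
      have := hL.fac (coneOf G s.ι (compwise G s.ι s.condition)) (P2.single i)
      rw [coneOf_app_single] at this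
      simp [hα i] at this; exact this
    · intro s m hm
      rw [Fork.ι_ofι] at hm
      apply hL.uniq (coneOf G s.ι (compwise G s.ι s.condition)) m
      intro S
      have happ : α.app S = α.app (P2.single (pt S)) ≫ G.map (memHom (pt_mem S)) :=
        ((Cone.mk L α).w (memHom (pt_mem S))).symm
      have hmπ : m ≫ π (pt S) = s.ι ≫ Pi.π _ (pt S) := by
        rw [← hm, Category.assoc]; simp
      calc m ≫ α.app S
          = m ≫ π (pt S) ≫ G.map (memHom (pt_mem S)) := by rw [happ, hα]
        _ = (m ≫ π (pt S)) ≫ G.map (memHom (pt_mem S)) := by rw [Category.assoc]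
        _ = (s.ι ≫ Pi.π _ (pt S)) ≫ G.map (memHom (pt_mem S)) := by rw [hmπ]
        _ = (show s.pt ⟶ G.obj S from (coneOf G s.ι (compwise G s.ι s.condition)).π.app S) := by
            rw [Category.assoc]; rfl
  · rintro ⟨w, ⟨hF⟩⟩
    have wc := compwise G (Pi.lift π) w
    refine ⟨(coneOf G (Pi.lift π) wc).π, fun i => ?_, ⟨IsLimit.mk
      (fun s => hF.lift (Fork.ofι (Pi.lift fun i => s.π.app (P2.single i)) (forkCond G s)))
      ?_ ?_⟩⟩
    · rw [coneOf_app_single]; simp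
    · intro s S
      have hι : hF.lift (Fork.ofι (Pi.lift fun i => s.π.app (P2.single i)) (forkCond G s)) ≫
          Pi.lift π = Pi.lift fun i => s.π.app (P2.single i) := by
        simpa using hF.fac (Fork.ofι (Pi.lift fun i => s.π.app (P2.single i)) (forkCond G s))
          WalkingParallelPair.zero
      have hi : ∀ i : I, hF.lift (Fork.ofι (Pi.lift fun i => s.π.app (P2.single i))
          (forkCond G s)) ≫ π i = s.π.app (P2.single i) := by
        intro i
        have := hι =≫ Pi.π (fun i : I => G.obj (P2.single i)) i
        simpa using this
      show hF.lift (Fork.ofι (Pi.lift fun i => s.π.app (P2.single i)) (forkCond G s)) ≫ (coneOf G (Pi.lift π) wc).π.app S = s.π.app S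
      have hstep : hF.lift (Fork.ofι (Pi.lift fun i => s.π.app (P2.single i))
            (forkCond G s)) ≫ (coneOf G (Pi.lift π) wc).π.app S
          = (hF.lift (Fork.ofι (Pi.lift fun i => s.π.app (P2.single i))
            (forkCond G s)) ≫ π (pt S)) ≫ G.map (memHom (pt_mem S)) := by
        show _ ≫ Pi.lift π ≫ Pi.π _ (pt S) ≫ G.map (memHom (pt_mem S)) = _
        simp
      rw [hstep, hi, s.w (memHom (pt_mem S))]
    · intro s m hm
      apply Fork.IsLimit.hom_ext hF
      rw [Fork.ι_ofι]
      have h1 : m ≫ Pi.lift π = Pi.lift fun i => s.π.app (P2.single i) := by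
        apply Pi.hom_ext
        intro i
        have := hm (P2.single i)
        rw [coneOf_app_single] at this
        simp only [Category.assoc, limit.lift_π] at this ⊢
        simpa using this
      rw [h1]
      symm
      simpa using hF.fac (Fork.ofι (Pi.lift fun i => s.π.app (P2.single i)) (forkCond G s))
        WalkingParallelPair.zero
end

section
/- Let F : P₂(I)ᵒᵖ ⥤ Top be a functor to topological spaces. Let Q_F be the quotient of the disjoint union Σ_{i∈I} F(i) by the equivalence relation generated by the relation R defined by: (i,x) R (j,y) iff there exists u ∈ F(i,j) with x = F(𝔦_{i,j}ᵒᵖ)(u) and y = F(𝔦_{j,i}ᵒᵖ)(u); equip Q_F with the final (coinduced) topology with respect to the family of canonical maps ι_i : F(i) → Q_F. Then: (a) (Q_F, (ι_i)) extends to a colimit cocone over F in Top; and (b) if moreover R is itself an equivalence relation and every structure map F(𝔦_{i,j}ᵒᵖ) : F(i,j) → F(i) is an open continuous map, then each canonical map ι_i : F(i) → Q_F is an open map. -/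
open CategoryTheory CategoryTheory.Limits Opposite

universe w v u

/-- The gluing relation on the disjoint union `Σ_{i∈I} F(i)`:
`(i,x) R (j,y)` iff there is `u ∈ F(i,j)` with `x = F(𝔦_{i,j}ᵒᵖ)(u)` and
`y = F(𝔦_{j,i}ᵒᵖ)(u)`. -/
def glueRelTop {I : Type w} (F : (P2 I)ᵒᵖ ⥤ TopCat.{w}) :
    (Σ i : I, F.obj (op (P2.single i))) → (Σ i : I, F.obj (op (P2.single i))) → Prop :=
  fun p q => ∃ u : F.obj (op (P2.pair p.1 q.1)),
    p.2 = F.map (P2.inclLeft p.1 q.1).op u ∧ q.2 = F.map (P2.inclRight p.1 q.1).op u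

/-- The underlying type of `Q_F`: the quotient of `Σ_{i∈I} F(i)` by the equivalence relation
generated by the gluing relation. -/
def gluedQuotTop {I : Type w} (F : (P2 I)ᵒᵖ ⥤ TopCat.{w}) : Type w :=
  Quot (glueRelTop F)

/-- `Q_F` carries the final (coinduced) topology with respect to the canonical maps
`ι_i : F(i) → Q_F`. -/
instance gluedQuotTop.topologicalSpace {I : Type w} (F : (P2 I)ᵒᵖ ⥤ TopCat.{w}) :
    TopologicalSpace (gluedQuotTop F) :=
  ⨆ i : I, TopologicalSpace.coinduced
    (fun x : F.obj (op (P2.single i)) => Quot.mk (glueRelTop F) ⟨i, x⟩) inferInstance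

/-- `Q_F` as an object of `Top`. -/
def gluedQuotTopCat {I : Type w} (F : (P2 I)ᵒᵖ ⥤ TopCat.{w}) : TopCat.{w} :=
  TopCat.of (gluedQuotTop F)

section Proof

namespace GluedProofAux

open P2

variable {I : Type w} (F : (P2 I)ᵒᵖ ⥤ TopCat.{w})

/-- morphism in `P2 I` from subset inclusion -/
def homOf {S T : P2 I} (h : S.obj ⊆ T.obj) : S ⟶ T := ObjectProperty.homMk (homOfLE h)

instance {S T : P2 I} : Subsingleton (S ⟶ T) :=
  ⟨fun a b => ObjectProperty.hom_ext _ (Subsingleton.elim _ _)⟩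

lemma single_sub {S : P2 I} {i : I} (h : i ∈ S.obj) : (P2.single i).obj ⊆ S.obj :=
  Set.singleton_subset_iff.mpr h

/-- restriction `F(S) → F(i)` for `i ∈ S` -/
def res (i : I) (S : P2 I) (h : i ∈ S.obj) :
    F.obj (op S) ⟶ F.obj (op (P2.single i)) :=
  F.map (homOf (single_sub h)).op

lemma res_res {S T : P2 I} (hST : S.obj ⊆ T.obj) (i : I) (hi : i ∈ S.obj)
    (u : F.obj (op T)) :
    res F i S hi (F.map (homOf hST).op u) = res F i T (hST hi) u := by
  rw [res, res, ← CategoryTheory.comp_apply, ← F.map_comp, ← op_comp]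
  congr 1

lemma mk_res_eq (S : P2 I) (i j : I) (hi : i ∈ S.obj) (hj : j ∈ S.obj)
    (u : F.obj (op S)) :
    Quot.mk (glueRelTop F) ⟨i, res F i S hi u⟩ =
      Quot.mk (glueRelTop F) ⟨j, res F j S hj u⟩ := by
  have hp : (P2.pair i j).obj ⊆ S.obj := by
    rintro x (rfl | rfl) <;> assumption
  have hmi : i ∈ (P2.pair i j).obj := Or.inl rfl
  have hmj : j ∈ (P2.pair i j).obj := Or.inr rfl
  apply Quot.sound
  refine ⟨F.map (homOf hp).op u, ?_, ?_⟩
  · show res F i S hi u = F.map (P2.inclLeft i j).op (F.map (homOf hp).op u)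
    rw [show P2.inclLeft i j = homOf (single_sub hmi) from Subsingleton.elim _ _]
    exact (res_res F hp i hmi u).symm
  · show res F j S hj u = F.map (P2.inclRight i j).op (F.map (homOf hp).op u)
    rw [show P2.inclRight i j = homOf (single_sub hmj) from Subsingleton.elim _ _]
    exact (res_res F hp j hmj u).symm

noncomputable def pick (S : P2 I) : I := S.2.1.choose
lemma pick_mem (S : P2 I) : pick S ∈ S.obj := S.2.1.choose_spec

lemma cont_mk (i : I) :
    @Continuous _ _ _ (gluedQuotTop.topologicalSpace F)
      (fun x : F.obj (op (P2.single i)) =>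
        (Quot.mk (glueRelTop F) ⟨i, x⟩ : gluedQuotTop F)) :=
  continuous_iff_coinduced_le.mpr (le_iSup
    (fun i : I => TopologicalSpace.coinduced
      (fun x : F.obj (op (P2.single i)) => Quot.mk (glueRelTop F) ⟨i, x⟩) inferInstance) i)

/-- the cocone legs -/
noncomputable def alphaApp (S : (P2 I)ᵒᵖ) : F.obj S ⟶ gluedQuotTopCat F :=
  TopCat.ofHom ⟨fun u => Quot.mk (glueRelTop F) ⟨pick S.unop, res F _ S.unop (pick_mem S.unop) u⟩,
    by exact (cont_mk F (pick S.unop)).comp (res F _ S.unop (pick_mem S.unop)).hom.continuous⟩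

lemma alphaApp_eq (S : (P2 I)ᵒᵖ) (i : I) (hi : i ∈ S.unop.obj) (u : F.obj S) :
    alphaApp F S u = Quot.mk (glueRelTop F) ⟨i, res F i S.unop hi u⟩ :=
  mk_res_eq F S.unop _ i (pick_mem S.unop) hi u

lemma res_self (i : I) (x : F.obj (op (P2.single i))) :
    res F i (P2.single i) rfl x = x := by
  unfold res
  rw [show homOf (single_sub (show i ∈ (P2.single i).obj from rfl)) = 𝟙 (P2.single i)
    from Subsingleton.elim _ _, op_id, F.map_id]
  rfl

lemma alphaApp_single (i : I) (x : F.obj (op (P2.single i))) :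
    alphaApp F (op (P2.single i)) x = Quot.mk (glueRelTop F) ⟨i, x⟩ := by
  rw [alphaApp_eq F (op (P2.single i)) i rfl x, res_self]

noncomputable def alpha : F ⟶ (Functor.const (P2 I)ᵒᵖ).obj (gluedQuotTopCat F) where
  app := alphaApp F
  naturality := by
    intro X Y f
    ext u
    show alphaApp F Y (F.map f u) = alphaApp F X u
    have hsub : Y.unop.obj ⊆ X.unop.obj := leOfHom f.unop.hom
    have hf : f = (homOf hsub).op := by
      rw [← f.op_unop]
      exact congrArg Quiver.Hom.op (Subsingleton.elim _ _)
    rw [hf, alphaApp_eq F Y (pick Y.unop) (pick_mem Y.unop),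
      alphaApp_eq F X (pick Y.unop) (hsub (pick_mem Y.unop)),
      res_res F hsub (pick Y.unop) (pick_mem Y.unop) u]

noncomputable def descFun (s : Cocone F) : gluedQuotTop F → s.pt :=
  Quot.lift (fun p => s.ι.app (op (P2.single p.1)) p.2) (by
    rintro ⟨i, x⟩ ⟨j, y⟩ ⟨u, hx, hy⟩
    dsimp only at hx hy ⊢
    rw [hx, hy]
    have h1 := ConcreteCategory.congr_hom
      (s.ι.naturality (P2.inclLeft i j).op) u
    have h2 := ConcreteCategory.congr_hom
      (s.ι.naturality (P2.inclRight i j).op) u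
    simp only [Functor.const_obj_obj, Functor.const_obj_map, Category.comp_id, CategoryTheory.comp_apply] at h1 h2
    exact h1.trans h2.symm)

lemma descFun_continuous (s : Cocone F) :
    @Continuous _ _ (gluedQuotTop.topologicalSpace F) _ (descFun F s) := by
  rw [continuous_iSup_dom]
  intro i
  refine continuous_coinduced_dom.mpr ?_
  exact (s.ι.app (op (P2.single i))).hom.continuous

noncomputable def descHom (s : Cocone F) : gluedQuotTopCat F ⟶ s.pt :=
  TopCat.ofHom ⟨descFun F s, descFun_continuous F s⟩

lemma fac (s : Cocone F) (S : (P2 I)ᵒᵖ) :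
    alphaApp F S ≫ descHom F s = s.ι.app S := by
  obtain ⟨S⟩ := S
  ext u
  show s.ι.app (op (P2.single (pick S))) (res F _ S (pick_mem S) u) = s.ι.app (op S) u
  have h := ConcreteCategory.congr_hom
    (s.ι.naturality (homOf (single_sub (pick_mem S))).op) u
  simp only [Functor.const_obj_obj, Functor.const_obj_map, Category.comp_id,
    CategoryTheory.comp_apply] at h
  exact h

noncomputable def colim : IsColimit (Cocone.mk (gluedQuotTopCat F) (alpha F)) where
  desc := descHom F
  fac := fun s S => fac F s S
  uniq := by
    intro s m hm
    ext q
    induction q using Quot.ind with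
    | _ p =>
      obtain ⟨i, x⟩ := p
      have h := ConcreteCategory.congr_hom (hm (op (P2.single i))) x
      calc m (Quot.mk (glueRelTop F) ⟨i, x⟩)
          = m (alphaApp F (op (P2.single i)) x) := by rw [alphaApp_single]
        _ = s.ι.app (op (P2.single i)) x := h
        _ = descHom F s (Quot.mk (glueRelTop F) ⟨i, x⟩) := rfl

end GluedProofAux

end Proof

/-- (a) `(Q_F, (ι_i))` extends to a colimit cocone over `F` in `Top`;
(b) if the gluing relation is already an equivalence relation and all structure maps
`F(𝔦ᵒᵖ) : F(i,j) → F(i)` are open (continuous) maps, then each `ι_i` is an open map. -/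
theorem gluedQuotTopCat_isColimit_and_openMaps {I : Type w} (F : (P2 I)ᵒᵖ ⥤ TopCat.{w}) :
    (∃ α : F ⟶ (Functor.const (P2 I)ᵒᵖ).obj (gluedQuotTopCat F),
        (∀ (i : I) (x : F.obj (op (P2.single i))),
          α.app (op (P2.single i)) x = Quot.mk (glueRelTop F) ⟨i, x⟩) ∧
        Nonempty (IsColimit (Cocone.mk (gluedQuotTopCat F) α))) ∧
    ((Equivalence (glueRelTop F) ∧
        (∀ i j : I, IsOpenMap (F.map (P2.inclLeft i j).op)) ∧
        (∀ i j : I, IsOpenMap (F.map (P2.inclRight i j).op))) →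
      ∀ i : I, IsOpenMap
        (fun x : F.obj (op (P2.single i)) =>
          (Quot.mk (glueRelTop F) ⟨i, x⟩ : gluedQuotTop F))) := by
  constructor
  · exact ⟨GluedProofAux.alpha F,
      fun i x => GluedProofAux.alphaApp_single F i x, ⟨GluedProofAux.colim F⟩⟩
  · rintro ⟨hEq, hL, _hR⟩ i U hU
    have key : ∀ j : I,
        IsOpen ((fun y : F.obj (op (P2.single j)) =>
            (Quot.mk (glueRelTop F) ⟨j, y⟩ : gluedQuotTop F)) ⁻¹'
          ((fun x : F.obj (op (P2.single i)) =>
            (Quot.mk (glueRelTop F) ⟨i, x⟩ : gluedQuotTop F)) '' U)) := by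
      intro j
      have heq : (fun y : F.obj (op (P2.single j)) =>
            (Quot.mk (glueRelTop F) ⟨j, y⟩ : gluedQuotTop F)) ⁻¹'
          ((fun x : F.obj (op (P2.single i)) =>
            (Quot.mk (glueRelTop F) ⟨i, x⟩ : gluedQuotTop F)) '' U) =
          F.map (P2.inclLeft j i).op '' (F.map (P2.inclRight j i).op ⁻¹' U) := by
        ext y
        simp only [Set.mem_preimage, Set.mem_image]
        constructor
        · rintro ⟨x, hxU, hxy⟩
          have hrel : glueRelTop F ⟨j, y⟩ ⟨i, x⟩ :=
            hEq.eqvGen_iff.mp (Quot.eq.mp hxy.symm)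
          obtain ⟨u, hy', hx'⟩ := hrel
          dsimp only at hy' hx'
          rw [hx'] at hxU
          exact ⟨u, hxU, hy'.symm⟩
        · rintro ⟨u, huU, rfl⟩
          exact ⟨F.map (P2.inclRight j i).op u, huU,
            (Quot.sound ⟨u, rfl, rfl⟩).symm⟩
      rw [heq]
      exact hL j i _ ((F.map (P2.inclRight j i).op).hom.continuous.isOpen_preimage U hU)
    exact isOpen_iSup_iff.mpr fun j => isOpen_coinduced.mpr (key j)
end

section
/- Let C be a category with pullbacks, and (U, (U_i, ι_i)_{i∈I}) a sink in C. Suppose F : P₂(I)ᵒᵖ ⥤ C is a functor with F({i}) = U_i for all i, and suppose there is a colimit cocone over F with apex U whose component at each singleton {i} is ι_i. Then the multicofork with apex U and legs ι_i over the multispan indexed by I², whose left objects are the pullbacks U_i ×_U U_j for (i,j) ∈ I², whose right objects are the U_i, and whose structure maps are the two pullback projections pr₁ : U_i ×_U U_j ⟶ U_i and pr₂ : U_i ×_U U_j ⟶ U_j, is also a colimit (i.e., U is the multicoequalizer of this multispan). -/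
open CategoryTheory CategoryTheory.Limits Opposite

universe w v u

/-- The multispan associated with a sink `(ι_i : U_i ⟶ U)`: left objects are the pullbacks
`U_i ×_U U_j` for `(i,j) ∈ I²`, right objects are the `U_i`, and the structure maps are the
two pullback projections. -/
noncomputable def sinkMultispan {C : Type u} [Category.{v} C] [HasPullbacks C] {I : Type w}
    {U : C} (X : I → C) (ι : ∀ i, X i ⟶ U) : MultispanIndex (MultispanShape.prod I) C where
  left p := pullback (ι p.1) (ι p.2)
  right i := X i
  fst p := pullback.fst (ι p.1) (ι p.2)
  snd p := pullback.snd (ι p.1) (ι p.2)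

/-- The inclusion `{i} ⟶ S` in `P2 I`. -/
def P2incl {I : Type w} (S : P2 I) {i : I} (hi : i ∈ S.obj) : P2.single i ⟶ S :=
  ObjectProperty.homMk (homOfLE (Set.singleton_subset_iff.mpr hi))

instance {I : Type w} (S T : P2 I) : Subsingleton (S ⟶ T) := by
  exact ⟨fun f g => InducedCategory.hom_ext (Subsingleton.elim _ _)⟩

instance {I : Type w} (S T : (P2 I)ᵒᵖ) : Subsingleton (S ⟶ T) :=
  ⟨fun f g => Quiver.Hom.unop_inj (Subsingleton.elim f.unop g.unop)⟩

/-- Two maps into the right objects of a sink multispan which agree after composing with the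
sink agree after composing with the legs of any multicofork. -/
theorem key_aux {C : Type u} [Category.{v} C] [HasPullbacks C] {I : Type w} {X : I → C}
    {U : C} (ι : ∀ i, X i ⟶ U) (E : Multicofork (sinkMultispan X ι))
    {W : C} {i j : I} (fi : W ⟶ X i) (fj : W ⟶ X j) (hw : fi ≫ ι i = fj ≫ ι j) :
    fi ≫ E.π i = fj ≫ E.π j := by
  have hcond : pullback.fst (ι i) (ι j) ≫ E.π i = pullback.snd (ι i) (ι j) ≫ E.π j :=
    E.condition (i, j)
  have h1 : pullback.lift _ _ hw ≫ pullback.fst (ι i) (ι j) = fi := pullback.lift_fst _ _ _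
  have h2 : pullback.lift _ _ hw ≫ pullback.snd (ι i) (ι j) = fj := pullback.lift_snd _ _ _
  calc fi ≫ E.π i
      = pullback.lift _ _ hw ≫ (pullback.fst (ι i) (ι j) ≫ E.π i) := by
        erw [← Category.assoc, h1]
    _ = pullback.lift _ _ hw ≫ (pullback.snd (ι i) (ι j) ≫ E.π j) := by rw [hcond]
    _ = fj ≫ E.π j := by erw [← Category.assoc, h2]

/-- The cocone over `F` induced by a multicofork over the sink multispan. -/
noncomputable def sinkCocone {C : Type u} [Category.{v} C] [HasPullbacks C] {I : Type w}
    (F : (P2 I)ᵒᵖ ⥤ C) {U : C} (ι : ∀ i : I, F.obj (op (P2.single i)) ⟶ U)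
    (hw : ∀ (S : P2 I) {i j : I} (hi : i ∈ S.obj) (hj : j ∈ S.obj),
      F.map (P2incl S hi).op ≫ ι i = F.map (P2incl S hj).op ≫ ι j)
    (E : Multicofork (sinkMultispan (fun i => F.obj (op (P2.single i))) ι)) :
    Cocone F where
  pt := E.pt
  ι :=
    { app := fun Sop => F.map (P2incl (unop Sop) (unop Sop).property.1.choose_spec).op
        ≫ E.π (unop Sop).property.1.choose
      naturality := by
        intro Sop Top f
        dsimp
        erw [Category.comp_id, ← Category.assoc, ← F.map_comp]
        have heq : f ≫ (P2incl (unop Top) (unop Top).property.1.choose_spec).op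
            = (P2incl (unop Sop)
                (leOfHom f.unop.hom (unop Top).property.1.choose_spec)).op :=
          Subsingleton.elim _ _
        rw [heq]
        exact key_aux ι E _ _ (hw (unop Sop) _ _) }

/-- If `U` is a colimit (glued-up object) of a functor `F : P₂(I)ᵒᵖ ⥤ C`
through the sink morphisms `ι_i : F({i}) ⟶ U`, then `U` is also the multicoequalizer of the
multispan formed by the pullbacks `U_i ×_U U_j` with the two pullback projections. -/
theorem multicoequalizer_of_gluedUp {C : Type u} [Category.{v} C] [HasPullbacks C]
    {I : Type w} (F : (P2 I)ᵒᵖ ⥤ C) (U : C)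
    (ι : ∀ i : I, F.obj (op (P2.single i)) ⟶ U)
    (h : ∃ α : F ⟶ (Functor.const (P2 I)ᵒᵖ).obj U,
        (∀ i : I, α.app (op (P2.single i)) = ι i) ∧
          Nonempty (IsColimit (Cocone.mk U α))) :
    Nonempty (IsColimit (Multicofork.ofπ
      (sinkMultispan (fun i => F.obj (op (P2.single i))) ι) U ι
      (fun _ => pullback.condition))) := by
  obtain ⟨α, hα, ⟨hc⟩⟩ := h
  have hfac : ∀ (S : P2 I) {i : I} (hi : i ∈ S.obj),
      F.map (P2incl S hi).op ≫ ι i = α.app (op S) := by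
    intro S i hi
    rw [← hα i]
    have := α.naturality (P2incl S hi).op
    simpa using this
  have hw : ∀ (S : P2 I) {i j : I} (hi : i ∈ S.obj) (hj : j ∈ S.obj),
      F.map (P2incl S hi).op ≫ ι i = F.map (P2incl S hj).op ≫ ι j := by
    intro S i j hi hj
    rw [hfac S hi, hfac S hj]
  refine ⟨Multicofork.IsColimit.mk _ (fun E => hc.desc (sinkCocone F ι hw E)) ?_ ?_⟩
  · intro E i
    show ι i ≫ hc.desc (sinkCocone F ι hw E) = E.π i
    rw [← hα i, hc.fac (sinkCocone F ι hw E) (op (P2.single i))]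
    show F.map (P2incl (P2.single i) (P2.single i).property.1.choose_spec).op
        ≫ E.π (P2.single i).property.1.choose = E.π i
    have hkey := key_aux ι E
      (F.map (P2incl (P2.single i) (P2.single i).property.1.choose_spec).op)
      (F.map (P2incl (P2.single i) (show i ∈ (P2.single i).obj from rfl)).op)
      (hw (P2.single i) _ _)
    erw [hkey]
    have hid : P2incl (P2.single i) (show i ∈ (P2.single i).obj from rfl) = 𝟙 _ :=
      Subsingleton.elim _ _
    erw [hid, op_id, F.map_id, Category.id_comp]
  · intro E m hm
    have hm' : ∀ i, ι i ≫ m = E.π i := hm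
    refine hc.uniq (sinkCocone F ι hw E) m ?_
    intro Sop
    show α.app Sop ≫ m
        = F.map (P2incl (unop Sop) (unop Sop).property.1.choose_spec).op
          ≫ E.π (unop Sop).property.1.choose
    erw [← hfac (unop Sop) (unop Sop).property.1.choose_spec, Category.assoc,
      hm' (unop Sop).property.1.choose]
end

section
/- Let C be a locally small category with pullbacks. Let (ι_i : U_i ⟶ U)_{i∈I} be a universal effective epimorphism, and for each i ∈ I let (ℓ_{ij} : V_{ij} ⟶ U_i)_{j∈J_i} be a universal effective epimorphism. Then the composite family (ι_i ∘ ℓ_{ij} : V_{ij} ⟶ U)_{(i,j), i∈I, j∈J_i} is a universal effective epimorphism. -/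
open CategoryTheory CategoryTheory.Limits Opposite

universe w w' v u

/-- A family of morphisms `(ι_i : X_i ⟶ U)` is an effective epimorphism if for every object
`Z` the diagram of sets `Hom(U,Z) ⟶ ∏_i Hom(X_i,Z) ⇉ ∏_{(i,j)} Hom(X_i ×_U X_j, Z)` is an
equalizer; concretely, every family `(f_i)` satisfying `pr₁ ≫ f_i = pr₂ ≫ f_j` for all
`i, j` factors uniquely through `U`. -/
def IsEffectiveEpiFamilyHom {C : Type u} [Category.{v} C] [HasPullbacks C] {I : Type w}
    {U : C} (X : I → C) (ι : ∀ i, X i ⟶ U) : Prop :=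
  ∀ (Z : C) (f : ∀ i, X i ⟶ Z),
    (∀ i j, pullback.fst (ι i) (ι j) ≫ f i = pullback.snd (ι i) (ι j) ≫ f j) →
      ∃! g : U ⟶ Z, ∀ i, ι i ≫ g = f i

/-- A family `(ι_i : X_i ⟶ U)` is a universal effective epimorphism if for every morphism
`f : V ⟶ U` the pulled-back family `(pr₂ : X_i ×_U V ⟶ V)` is an effective epimorphism. -/
def IsUniversalEffectiveEpiFamilyHom {C : Type u} [Category.{v} C] [HasPullbacks C]
    {I : Type w} {U : C} (X : I → C) (ι : ∀ i, X i ⟶ U) : Prop :=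
  ∀ (V : C) (f : V ⟶ U),
    IsEffectiveEpiFamilyHom (fun i => pullback (ι i) f) (fun i => pullback.snd (ι i) f)

/-- An effective epimorphic family is jointly epic. -/
theorem IsEffectiveEpiFamilyHom.jointly_epi {C : Type u} [Category.{v} C] [HasPullbacks C]
    {I : Type w} {U : C} {X : I → C} {ι : ∀ i, X i ⟶ U}
    (h : IsEffectiveEpiFamilyHom X ι) {Z : C} {a b : U ⟶ Z}
    (hab : ∀ i, ι i ≫ a = ι i ≫ b) : a = b := by
  obtain ⟨g, -, hu⟩ := h Z (fun i => ι i ≫ a) (fun i j => by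
    rw [← Category.assoc, ← Category.assoc, pullback.condition])
  exact (hu a fun i => rfl).trans (hu b fun i => (hab i).symm).symm

/-- The composition of universal effective epimorphisms is a universal
effective epimorphism. -/
theorem isUniversalEffectiveEpiFamilyHom_comp {C : Type u} [Category.{v} C] [HasPullbacks C]
    {I : Type w} {U : C} {X : I → C} {ι : ∀ i, X i ⟶ U}
    {J : I → Type w'} {V : ∀ i, J i → C} {ℓ : ∀ i (j : J i), V i j ⟶ X i}
    (hι : IsUniversalEffectiveEpiFamilyHom X ι)
    (hℓ : ∀ i, IsUniversalEffectiveEpiFamilyHom (V i) (ℓ i)) :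
    IsUniversalEffectiveEpiFamilyHom (fun p : Σ i, J i => V p.1 p.2)
      (fun p => ℓ p.1 p.2 ≫ ι p.1) := by
  intro W f Z fp hcompat
  -- the canonical map from `V i j ×_{X i} (X i ×_U W)` to `V i j ×_U W`
  have hq : ∀ (i : I) (j : J i),
      pullback.fst (ℓ i j) (pullback.fst (ι i) f) ≫ (ℓ i j ≫ ι i) =
        (pullback.snd (ℓ i j) (pullback.fst (ι i) f) ≫ pullback.snd (ι i) f) ≫ f := by
    intro i j
    rw [← Category.assoc, pullback.condition, Category.assoc, Category.assoc,
      pullback.condition]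
  let q : ∀ (i : I) (j : J i),
      pullback (ℓ i j) (pullback.fst (ι i) f) ⟶ pullback (ℓ i j ≫ ι i) f :=
    fun i j => pullback.lift _ _ (hq i j)
  have hqfst : ∀ (i : I) (j : J i),
      q i j ≫ pullback.fst (ℓ i j ≫ ι i) f = pullback.fst (ℓ i j) (pullback.fst (ι i) f) :=
    fun i j => pullback.lift_fst _ _ _
  have hqsnd : ∀ (i : I) (j : J i),
      q i j ≫ pullback.snd (ℓ i j ≫ ι i) f =
        pullback.snd (ℓ i j) (pullback.fst (ι i) f) ≫ pullback.snd (ι i) f :=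
    fun i j => pullback.lift_snd _ _ _
  -- Step 1: for each `i`, factor through `X i ×_U W`
  have hgex : ∀ i : I, ∃! gi : pullback (ι i) f ⟶ Z,
      ∀ j : J i, pullback.snd (ℓ i j) (pullback.fst (ι i) f) ≫ gi = q i j ≫ fp ⟨i, j⟩ := by
    intro i
    refine hℓ i (pullback (ι i) f) (pullback.fst (ι i) f) Z (fun j => q i j ≫ fp ⟨i, j⟩) ?_
    intro j j'
    have hE : (pullback.fst (pullback.snd (ℓ i j) (pullback.fst (ι i) f))
          (pullback.snd (ℓ i j') (pullback.fst (ι i) f)) ≫ q i j) ≫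
          pullback.snd (ℓ i j ≫ ι i) f =
        (pullback.snd (pullback.snd (ℓ i j) (pullback.fst (ι i) f))
          (pullback.snd (ℓ i j') (pullback.fst (ι i) f)) ≫ q i j') ≫
          pullback.snd (ℓ i j' ≫ ι i) f := by
      rw [Category.assoc, hqsnd, Category.assoc, hqsnd, ← Category.assoc, pullback.condition,
        Category.assoc]
    have := congrArg (fun t => pullback.lift _ _ hE ≫ t) (hcompat ⟨i, j⟩ ⟨i, j'⟩)
    simpa only [pullback.lift_fst_assoc, pullback.lift_snd_assoc, Category.assoc] using this
  choose g hg hgu using hgex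
  -- Step 2: the `g i` are compatible over `W`
  have gcompat : ∀ i i' : I,
      pullback.fst (pullback.snd (ι i) f) (pullback.snd (ι i') f) ≫ g i =
        pullback.snd (pullback.snd (ι i) f) (pullback.snd (ι i') f) ≫ g i' := by
    intro i i'
    set r1 := pullback.fst (pullback.snd (ι i) f) (pullback.snd (ι i') f) with hr1
    set r2 := pullback.snd (pullback.snd (ι i) f) (pullback.snd (ι i') f) with hr2
    refine IsEffectiveEpiFamilyHom.jointly_epi (hℓ i _ (r1 ≫ pullback.fst (ι i) f)) ?_
    intro k
    refine IsEffectiveEpiFamilyHom.jointly_epi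
      (hℓ i' _ (pullback.snd (ℓ i k) (r1 ≫ pullback.fst (ι i) f) ≫ r2 ≫ pullback.fst (ι i') f))
      ?_
    intro m
    set fA := pullback.fst (ℓ i k) (r1 ≫ pullback.fst (ι i) f) with hfA
    set sA := pullback.snd (ℓ i k) (r1 ≫ pullback.fst (ι i) f) with hsA
    set fB := pullback.fst (ℓ i' m) (sA ≫ r2 ≫ pullback.fst (ι i') f) with hfB
    set sB := pullback.snd (ℓ i' m) (sA ≫ r2 ≫ pullback.fst (ι i') f) with hsB
    have hA : fA ≫ ℓ i k = sA ≫ r1 ≫ pullback.fst (ι i) f := pullback.condition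
    have hB : fB ≫ ℓ i' m = sB ≫ sA ≫ r2 ≫ pullback.fst (ι i') f := pullback.condition
    have hR : r1 ≫ pullback.snd (ι i) f = r2 ≫ pullback.snd (ι i') f := pullback.condition
    have hc1 : (sB ≫ fA) ≫ ℓ i k = (sB ≫ sA ≫ r1) ≫ pullback.fst (ι i) f := by
      rw [Category.assoc, hA]; simp only [Category.assoc]
    let c1 : pullback (ℓ i' m) (sA ≫ r2 ≫ pullback.fst (ι i') f) ⟶
        pullback (ℓ i k) (pullback.fst (ι i) f) := pullback.lift (sB ≫ fA) (sB ≫ sA ≫ r1) hc1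
    have hc2 : fB ≫ ℓ i' m = (sB ≫ sA ≫ r2) ≫ pullback.fst (ι i') f := by
      rw [hB]; simp only [Category.assoc]
    let c2 : pullback (ℓ i' m) (sA ≫ r2 ≫ pullback.fst (ι i') f) ⟶
        pullback (ℓ i' m) (pullback.fst (ι i') f) := pullback.lift fB (sB ≫ sA ≫ r2) hc2
    have ht : (c1 ≫ q i k) ≫ pullback.snd (ℓ i k ≫ ι i) f =
        (c2 ≫ q i' m) ≫ pullback.snd (ℓ i' m ≫ ι i') f := by
      rw [Category.assoc, hqsnd, Category.assoc, hqsnd]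
      simp only [c1, c2, pullback.lift_snd_assoc, Category.assoc, hR]
    have key := congrArg (fun t => pullback.lift (c1 ≫ q i k) (c2 ≫ q i' m) ht ≫ t)
      (hcompat ⟨i, k⟩ ⟨i', m⟩)
    simp only [pullback.lift_fst_assoc, pullback.lift_snd_assoc, Category.assoc] at key
    show sB ≫ sA ≫ r1 ≫ g i = sB ≫ sA ≫ r2 ≫ g i'
    calc sB ≫ sA ≫ r1 ≫ g i
        = c1 ≫ pullback.snd (ℓ i k) (pullback.fst (ι i) f) ≫ g i := by
          simp only [c1, pullback.lift_snd_assoc, Category.assoc]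
      _ = c1 ≫ q i k ≫ fp ⟨i, k⟩ := by rw [hg i k]
      _ = c2 ≫ q i' m ≫ fp ⟨i', m⟩ := key
      _ = c2 ≫ pullback.snd (ℓ i' m) (pullback.fst (ι i') f) ≫ g i' := by rw [hg i' m]
      _ = sB ≫ sA ≫ r2 ≫ g i' := by
          simp only [c2, pullback.lift_snd_assoc, Category.assoc]
  -- Step 3: factor through `W`
  obtain ⟨G, hG, hGu⟩ := hι W f Z g gcompat
  refine ⟨G, ?_, ?_⟩
  · rintro ⟨i, j⟩
    have he : (pullback.fst (ℓ i j ≫ ι i) f ≫ ℓ i j) ≫ ι i = pullback.snd (ℓ i j ≫ ι i) f ≫ f := by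
      rw [Category.assoc]; exact pullback.condition
    let e : pullback (ℓ i j ≫ ι i) f ⟶ pullback (ι i) f :=
      pullback.lift (pullback.fst (ℓ i j ≫ ι i) f ≫ ℓ i j) (pullback.snd (ℓ i j ≫ ι i) f) he
    have hm : pullback.fst (ℓ i j ≫ ι i) f ≫ ℓ i j = e ≫ pullback.fst (ι i) f :=
      (pullback.lift_fst _ _ _).symm
    let mm : pullback (ℓ i j ≫ ι i) f ⟶ pullback (ℓ i j) (pullback.fst (ι i) f) :=
      pullback.lift (pullback.fst (ℓ i j ≫ ι i) f) e hm
    have hmq : mm ≫ q i j = 𝟙 _ := by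
      apply pullback.hom_ext
      · rw [Category.assoc, hqfst, Category.id_comp, pullback.lift_fst]
      · rw [Category.assoc, hqsnd, Category.id_comp, ← Category.assoc, pullback.lift_snd,
          pullback.lift_snd]
    show pullback.snd (ℓ i j ≫ ι i) f ≫ G = fp ⟨i, j⟩
    calc pullback.snd (ℓ i j ≫ ι i) f ≫ G = e ≫ pullback.snd (ι i) f ≫ G := by
          rw [← Category.assoc, pullback.lift_snd]
      _ = e ≫ g i := by rw [hG i]
      _ = mm ≫ pullback.snd (ℓ i j) (pullback.fst (ι i) f) ≫ g i := by
          rw [← Category.assoc, pullback.lift_snd]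
      _ = mm ≫ q i j ≫ fp ⟨i, j⟩ := by rw [hg i j]
      _ = fp ⟨i, j⟩ := by rw [← Category.assoc, hmq, Category.id_comp]
  · intro g' hg'
    refine hGu g' fun i => hgu i _ fun j => ?_
    rw [← Category.assoc, ← hqsnd, Category.assoc, hg' ⟨i, j⟩]
end

section
/- Given gluing data of sets of type I, the following are equivalent: (A) the relation R is an equivalence relation on Σ_{i∈I} X_i and every map f_{i,j} is injective; (B) every canonical map ι_i : X_i → Q is injective, every f_{i,j} is injective, and for all i, j ∈ I the image ι_i(f_{i,j}(X_{i,j})) equals the intersection (range ι_i) ∩ (range ι_j) in Q. -/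
universe u

/-- Gluing data of sets of type `I`: types `X i`, overlap types `Xp i j` with `Xp i i = X i`,
maps `f i j : Xp i j → X i` with `f i i = id`, and transition bijections
`τ i j : Xp i j → Xp j i` with `τ j i ∘ τ i j = id` and `τ i i = id`. -/
structure SetGluingData (I : Type u) where
  /-- the sets being glued -/
  X : I → Type u
  /-- the overlap sets -/
  Xp : I → I → Type u
  /-- the inclusion of the overlaps -/
  f : ∀ i j, Xp i j → X i
  /-- the transition maps -/
  τ : ∀ i j, Xp i j → Xp j i
  diag : ∀ i, Xp i i = X i
  f_diag : ∀ i (u : Xp i i), f i i u = cast (diag i) u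
  τ_invol : ∀ i j (u : Xp i j), τ j i (τ i j u) = u
  τ_diag : ∀ i (u : Xp i i), τ i i u = u

namespace SetGluingData

variable {I : Type u} (D : SetGluingData I)

/-- The gluing relation on the disjoint union `Σ_{i∈I} X_i`: `(i,x) R (j,y)` iff there is
`u ∈ X_{i,j}` with `x = f_{i,j}(u)` and `y = f_{j,i}(τ_{i,j}(u))`. -/
def R : (Σ i, D.X i) → (Σ i, D.X i) → Prop :=
  fun p q => ∃ u : D.Xp p.1 q.1,
    p.2 = D.f p.1 q.1 u ∧ q.2 = D.f q.1 p.1 (D.τ p.1 q.1 u)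

/-- The glued set: the quotient of `Σ_{i∈I} X_i` by the equivalence relation generated by
the gluing relation. -/
def Q : Type u := Quot D.R

/-- The canonical map `ι_i : X_i → Q`. -/
def ι (i : I) : D.X i → D.Q := fun x => Quot.mk D.R ⟨i, x⟩

/-- For gluing data of sets, the gluing relation is an equivalence relation
with all `f_{i,j}` injective if and only if the canonical maps `ι_i` are injective, the
`f_{i,j}` are injective, and `ι_i (f_{i,j}(X_{i,j})) = range ι_i ∩ range ι_j` for all `i, j`. -/
theorem equivalence_iff_images_are_intersections :
    (Equivalence D.R ∧ ∀ i j, Function.Injective (D.f i j)) ↔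
      ((∀ i, Function.Injective (D.ι i)) ∧ (∀ i j, Function.Injective (D.f i j)) ∧
        ∀ i j, D.ι i '' Set.range (D.f i j) = Set.range (D.ι i) ∩ Set.range (D.ι j)) := by
  constructor
  · rintro ⟨heq, hf⟩
    have key : ∀ {p q : Σ i, D.X i}, Quot.mk D.R p = Quot.mk D.R q → D.R p q := by
      intro p q h
      exact heq.eqvGen_iff.mp (Quot.eq.mp h)
    refine ⟨?_, hf, ?_⟩
    · intro i x y h
      obtain ⟨u, hx, hy⟩ := key h
      rw [D.τ_diag, ← hx] at hy
      exact hy.symm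
    · intro i j
      ext q
      constructor
      · rintro ⟨x, ⟨u, rfl⟩, rfl⟩
        exact ⟨⟨D.f i j u, rfl⟩, ⟨D.f j i (D.τ i j u), (Quot.sound ⟨u, rfl, rfl⟩).symm⟩⟩
      · rintro ⟨⟨x, rfl⟩, ⟨y, hy⟩⟩
        obtain ⟨u, hx, -⟩ := key (q := ⟨j, y⟩) hy.symm
        exact ⟨x, ⟨u, hx.symm⟩, rfl⟩
  · rintro ⟨hι, hf, him⟩
    refine ⟨⟨?_, ?_, ?_⟩, hf⟩
    · rintro ⟨i, x⟩
      refine ⟨cast (D.diag i).symm x, ?_, ?_⟩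
      · rw [D.f_diag]; simp
      · rw [D.τ_diag, D.f_diag]; simp
    · rintro ⟨i, x⟩ ⟨j, y⟩ ⟨u, hx, hy⟩
      exact ⟨D.τ i j u, hy, by rw [D.τ_invol]; exact hx⟩
    · rintro ⟨i, x⟩ ⟨j, y⟩ ⟨k, z⟩ hxy hyz
      have h1 : D.ι i x = D.ι j y := Quot.sound hxy
      have h2 : D.ι j y = D.ι k z := Quot.sound hyz
      have hm : D.ι i x ∈ D.ι i '' Set.range (D.f i k) := by
        rw [him i k]
        exact ⟨⟨x, rfl⟩, ⟨z, by rw [h1, h2]⟩⟩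
      obtain ⟨x', ⟨w, rfl⟩, hw⟩ := hm
      have hx : D.f i k w = x := hι i hw
      refine ⟨w, hx.symm, ?_⟩
      have hk : D.ι k (D.f k i (D.τ i k w)) = D.ι k z := by
        rw [← h2, ← h1, ← hw]
        exact (Quot.sound ⟨w, rfl, rfl⟩).symm
      exact (hι k hk).symm

end SetGluingData
end

section
/- Given gluing data of sets of type I, the following are equivalent: (B) every canonical map ι_i : X_i → Q is injective, every f_{i,j} is injective, and for all i, j ∈ I the image ι_i(f_{i,j}(X_{i,j})) equals (range ι_i) ∩ (range ι_j) in Q; (C) every f_{i,j} is injective and for all i, j ∈ I the canonical map X_{i,j} → { (x,y) ∈ X_i × X_j | ι_i(x) = ι_j(y) } sending u to (f_{i,j}(u), f_{j,i}(τ_{i,j}(u))) is a bijection. -/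
universe u

namespace SetGluingData

variable {I : Type u} (D : SetGluingData I)

/-- For gluing data of sets, the condition that the canonical maps `ι_i` and
the `f_{i,j}` are injective with `ι_i (f_{i,j}(X_{i,j})) = range ι_i ∩ range ι_j` is
equivalent to the condition that the `f_{i,j}` are injective and the canonical map
`X_{i,j} → {(x,y) ∈ X_i × X_j | ι_i x = ι_j y}`, `u ↦ (f_{i,j} u, f_{j,i}(τ_{i,j} u))`, is a
bijection for all `i, j`. -/
theorem images_iff_overlaps_are_fibre_products :
    ((∀ i, Function.Injective (D.ι i)) ∧ (∀ i j, Function.Injective (D.f i j)) ∧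
        ∀ i j, D.ι i '' Set.range (D.f i j) = Set.range (D.ι i) ∩ Set.range (D.ι j)) ↔
      ((∀ i j, Function.Injective (D.f i j)) ∧
        ∀ i j, Function.Bijective
          (fun u : D.Xp i j =>
            (⟨(D.f i j u, D.f j i (D.τ i j u)), Quot.sound ⟨u, rfl, rfl⟩⟩ :
              { p : D.X i × D.X j // D.ι i p.1 = D.ι j p.2 }))) := by
  constructor
  · rintro ⟨hι, hf, himg⟩
    refine ⟨hf, fun i j => ⟨?_, ?_⟩⟩
    · intro u v h
      exact hf i j (congrArg (fun p => p.1.1) h)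
    · rintro ⟨⟨x, y⟩, hxy⟩
      have hx : D.ι i x ∈ Set.range (D.ι i) ∩ Set.range (D.ι j) :=
        ⟨⟨x, rfl⟩, ⟨y, hxy.symm⟩⟩
      rw [← himg i j] at hx
      obtain ⟨x', ⟨u, rfl⟩, hxx⟩ := hx
      have hx' : x = D.f i j u := (hι i hxx).symm
      have hy : y = D.f j i (D.τ i j u) := by
        apply hι j
        rw [← hxy, hx']
        exact Quot.sound ⟨u, rfl, rfl⟩
      exact ⟨u, by apply Subtype.ext; simp [hx', hy]⟩
  · rintro ⟨hf, hbij⟩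
    refine ⟨?_, hf, ?_⟩
    · intro i x y h
      obtain ⟨u, hu⟩ := (hbij i i).2 ⟨(x, y), h⟩
      have h1 : D.f i i u = x := congrArg (fun p => p.1.1) hu
      have h2 : D.f i i (D.τ i i u) = y := congrArg (fun p => p.1.2) hu
      rw [D.τ_diag] at h2
      rw [← h1, ← h2]
    · intro i j
      ext q
      constructor
      · rintro ⟨x, ⟨u, rfl⟩, rfl⟩
        exact ⟨⟨_, rfl⟩, ⟨D.f j i (D.τ i j u), (Quot.sound ⟨u, rfl, rfl⟩).symm⟩⟩
      · rintro ⟨⟨x, rfl⟩, ⟨y, hy⟩⟩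
        obtain ⟨u, hu⟩ := (hbij i j).2 ⟨(x, y), hy.symm⟩
        have h1 : D.f i j u = x := congrArg (fun p => p.1.1) hu
        exact ⟨x, ⟨u, h1⟩, rfl⟩

end SetGluingData
end
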